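/- There exists a constant C > 0 such that for all integers n ≥ 1 and all integers k with |k − n/2| < n/4, one has | C(n, k) / ( √(n / (2π k (n − k))) · exp(n · I(k/n)) ) − 1 | ≤ C/n. -/

import Mathlib

/-- The entropy-like function `I(t) = (t-1) log(1-t) - t log t`. Since `Real.log 0 = 0`
in Mathlib, this automatically satisfies the conventions `I(0) = I(1) = 0`. -/
noncomputable def Ifun (t : ℝ) : ℝ := (t - 1) * Real.log (1 - t) - t * Real.log t

open Stirling Real Filter Topology Nat

-- telescoping bound
lemma log_stirling_diff (m : ℕ) (hm : 1 ≤ m) : ∀ N, m ≤ N →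
    Real.log (stirlingSeq m) ≤ Real.log (stirlingSeq N) + (1/(2*m) - 1/(2*(N:ℝ))) := by
  intro N hN
  induction N, hN using Nat.le_induction with
  | base => simp
  | succ N hmN ih =>
    have hN1 : 1 ≤ N := le_trans hm hmN
    obtain ⟨p, rfl⟩ : ∃ p, N = p + 1 := ⟨N - 1, (Nat.succ_pred_eq_of_pos hN1).symm⟩
    have hstep : Real.log (stirlingSeq (p+1)) - Real.log (stirlingSeq (p+2)) ≤ 1/(4*(↑(p+1):ℝ)^2) :=
      log_stirlingSeq_sub_log_stirlingSeq_succ (p+1)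
    have hp : (0:ℝ) < (p:ℝ) + 1 := by positivity
    have harith : 1/(4 * (↑(p+1):ℝ)^2) ≤ 1/(2*(↑(p+1):ℝ)) - 1/(2*((↑(p+1):ℝ)+1)) := by
      push_cast
      rw [div_sub_div _ _ (by positivity) (by positivity), div_le_div_iff₀ (by positivity) (by positivity)]
      ring_nf
      nlinarith [hp]
    have : Real.log (stirlingSeq (p+1)) ≤ Real.log (stirlingSeq (p+2)) + (1/(2*(↑(p+1):ℝ)) - 1/(2*((↑(p+1):ℝ)+1))) := by
      nlinarith [hstep, harith]
    calc Real.log (stirlingSeq m) ≤ Real.log (stirlingSeq (p+1)) + (1/(2*m) - 1/(2*(↑(p+1):ℝ))) := ih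
    _ ≤ Real.log (stirlingSeq (p+2)) + (1/(2*m) - 1/(2*(↑(p+1+1):ℝ))) := by
        push_cast
        push_cast at this
        linarith
    _ = Real.log (stirlingSeq (p+1+1)) + (1/(2*m) - 1/(2*(↑(p+1+1):ℝ))) := by norm_num

lemma stirling_upper (m : ℕ) (hm : 1 ≤ m) :
    stirlingSeq m ≤ Real.sqrt π * Real.exp (1/(2*m)) := by
  have hππ : (0:ℝ) < Real.sqrt π := Real.sqrt_pos.2 Real.pi_pos
  have hlim : Tendsto (fun N => Real.log (stirlingSeq N)) atTop (𝓝 (Real.log (Real.sqrt π))) :=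
    ((Real.continuousAt_log hππ.ne').tendsto).comp tendsto_stirlingSeq_sqrt_pi
  have hle : Real.log (stirlingSeq m) - 1/(2*m) ≤ Real.log (Real.sqrt π) := by
    refine ge_of_tendsto hlim ?_
    filter_upwards [eventually_ge_atTop m] with N hN
    have h := log_stirling_diff m hm N hN
    have hN0 : (0:ℝ) < 2 * (N:ℝ) := by
      have : 1 ≤ N := le_trans hm hN
      positivity
    have : 0 ≤ 1/(2*(N:ℝ)) := by positivity
    linarith
  have hpos : 0 < stirlingSeq m := by
    obtain ⟨p, rfl⟩ : ∃ p, m = p + 1 := ⟨m - 1, (Nat.succ_pred_eq_of_pos hm).symm⟩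
    exact stirlingSeq'_pos p
  have := Real.exp_le_exp.2 (by linarith : Real.log (stirlingSeq m) ≤ Real.log (Real.sqrt π) + 1/(2*m))
  rwa [Real.exp_log hpos, Real.exp_add, Real.exp_log hππ] at this

lemma stirling_lower (m : ℕ) (hm : 1 ≤ m) : Real.sqrt π ≤ stirlingSeq m := by
  have h : Tendsto (stirlingSeq ∘ Nat.succ) atTop (𝓝 (Real.sqrt π)) :=
    tendsto_stirlingSeq_sqrt_pi.comp (tendsto_add_atTop_nat 1)
  obtain ⟨p, rfl⟩ : ∃ p, m = p + 1 := ⟨m - 1, (Nat.succ_pred_eq_of_pos hm).symm⟩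
  exact stirlingSeq'_antitone.le_of_tendsto h p

lemma key_identity (n k : ℕ) (hk : 1 ≤ k) (hkn : k < n) :
    (n.choose k : ℝ) =
      (Real.sqrt π * stirlingSeq n / (stirlingSeq k * stirlingSeq (n - k))) *
      (Real.sqrt ((n : ℝ) / (2 * π * k * ((n : ℝ) - k))) *
        Real.exp ((n:ℝ) * Ifun ((k : ℝ) / n))) := by
  set b : ℕ := n - k with hbdef
  have hkb : k + b = n := Nat.add_sub_cancel' hkn.le
  have hb1 : 1 ≤ b := by omega
  have hn1 : 1 ≤ n := by omega
  have hbcast : (b : ℝ) = (n : ℝ) - k := by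
    rw [hbdef]; exact_mod_cast Nat.cast_sub hkn.le
  have hn0 : (0:ℝ) < n := by exact_mod_cast hn1
  have hk0 : (0:ℝ) < k := by exact_mod_cast hk
  have hb0 : (0:ℝ) < b := by exact_mod_cast hb1
  have hb0' : (0:ℝ) < (n:ℝ) - k := by rw [← hbcast]; exact hb0
  -- step 1: Ifun computation
  have h1 : (n:ℝ) * Ifun ((k:ℝ)/n) =
      n * Real.log n - k * Real.log k - b * Real.log b := by
    have e1 : 1 - (k:ℝ)/n = (b:ℝ)/n := by rw [hbcast]; field_simp
    unfold Ifun
    rw [e1, Real.log_div hb0.ne' hn0.ne', Real.log_div hk0.ne' hn0.ne', hbcast]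
    field_simp
    ring
  have h2 : Real.exp ((n:ℝ) * Ifun ((k:ℝ)/n)) =
      (n:ℝ)^n / ((k:ℝ)^k * (b:ℝ)^b) := by
    rw [h1, sub_sub, Real.exp_sub, Real.exp_add]
    rw [Real.exp_nat_mul, Real.exp_nat_mul, Real.exp_nat_mul,
      Real.exp_log hn0, Real.exp_log hk0, Real.exp_log hb0]
  -- step 2: sqrt part
  have hs : Real.sqrt π * Real.sqrt ((n : ℝ) / (2 * π * k * ((n : ℝ) - k))) =
      Real.sqrt (2*(n:ℝ)) / (Real.sqrt (2*(k:ℝ)) * Real.sqrt (2*(b:ℝ))) := by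
    rw [← Real.sqrt_mul Real.pi_pos.le, ← Real.sqrt_mul (by positivity : (0:ℝ) ≤ 2*(k:ℝ)),
      ← Real.sqrt_div (by positivity : (0:ℝ) ≤ 2*(n:ℝ))]
    congr 1
    rw [hbcast]
    field_simp
  -- step 3: factorial identities
  have dpos : ∀ m : ℕ, 1 ≤ m → (0:ℝ) < Real.sqrt (2*(m:ℝ)) * ((m:ℝ)/Real.exp 1)^m := by
    intro m hm
    have : (0:ℝ) < m := by exact_mod_cast hm
    positivity
  have hfac : ∀ m : ℕ, 1 ≤ m →
      (m ! : ℝ) = stirlingSeq m * (Real.sqrt (2*(m:ℝ)) * ((m:ℝ)/Real.exp 1)^m) := by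
    intro m hm
    rw [stirlingSeq, div_mul_cancel₀]
    exact (dpos m hm).ne'
  have hchoose : (n.choose k : ℝ) = (n ! : ℝ) / ((k ! : ℝ) * (b ! : ℝ)) := by
    rw [Nat.cast_choose ℝ hkn.le]
  have hππ : (0:ℝ) < Real.sqrt π := Real.sqrt_pos.2 Real.pi_pos
  have hsn := stirling_lower n hn1
  have hsk := stirling_lower k hk
  have hsb := stirling_lower b hb1
  have hsn0 : (0:ℝ) < stirlingSeq n := lt_of_lt_of_le hππ hsn
  have hsk0 : (0:ℝ) < stirlingSeq k := lt_of_lt_of_le hππ hsk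
  have hsb0 : (0:ℝ) < stirlingSeq b := lt_of_lt_of_le hππ hsb
  have hq1 : (0:ℝ) < Real.sqrt (2*(n:ℝ)) := Real.sqrt_pos.2 (by positivity)
  have hq2 : (0:ℝ) < Real.sqrt (2*(k:ℝ)) := Real.sqrt_pos.2 (by positivity)
  have hq3 : (0:ℝ) < Real.sqrt (2*(b:ℝ)) := Real.sqrt_pos.2 (by positivity)
  have hs' : Real.sqrt ((n : ℝ) / (2 * π * k * ((n : ℝ) - k))) =
      Real.sqrt (2*(n:ℝ)) / (Real.sqrt (2*(k:ℝ)) * Real.sqrt (2*(b:ℝ))) / Real.sqrt π := by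
    rw [eq_div_iff hππ.ne', mul_comm]
    exact hs
  have hEn : Real.exp 1 ^ n = Real.exp 1 ^ k * Real.exp 1 ^ b := by rw [← pow_add, hkb]
  rw [hchoose, hfac n hn1, hfac k hk, hfac b hb1, h2, hs']
  rw [div_pow, div_pow, div_pow, hEn]
  have hkk : (0:ℝ) < (k:ℝ)^k := by positivity
  have hbb : (0:ℝ) < (b:ℝ)^b := by positivity
  have he : (0:ℝ) < Real.exp 1 := Real.exp_pos 1
  field_simp

set_option maxHeartbeats 1000000 in
theorem binomial_asymptotic :
    ∃ C : ℝ, 0 < C ∧ ∀ n : ℕ, 1 ≤ n → ∀ k : ℕ, |(k : ℝ) - n / 2| < (n : ℝ) / 4 →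
      |(n.choose k : ℝ) /
          (Real.sqrt ((n : ℝ) / (2 * Real.pi * k * ((n : ℝ) - k))) *
            Real.exp (n * Ifun ((k : ℝ) / n))) - 1| ≤ C / n := by
  refine ⟨4, by norm_num, fun n hn k hk => ?_⟩
  have hn0 : (0:ℝ) < n := by exact_mod_cast hn
  have hn1' : (1:ℝ) ≤ n := by exact_mod_cast hn
  rw [abs_lt] at hk
  have hk4 : (n:ℝ)/4 < k := by linarith [hk.1]
  have hk34 : (k:ℝ) < 3*n/4 := by linarith [hk.2]
  have hk1 : 1 ≤ k := by
    by_contra h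
    push_neg at h
    interval_cases k
    simp at hk4
    linarith
  have hkn : k < n := by
    have : (k:ℝ) < n := by linarith
    exact_mod_cast this
  set b : ℕ := n - k with hbdef
  have hb1 : 1 ≤ b := by omega
  have hbcast : (b : ℝ) = (n : ℝ) - k := by
    rw [hbdef]; exact_mod_cast Nat.cast_sub hkn.le
  have hk0 : (0:ℝ) < k := by exact_mod_cast hk1
  have hb0 : (0:ℝ) < b := by exact_mod_cast hb1
  have hb4 : (n:ℝ)/4 < b := by rw [hbcast]; linarith
  -- denominator positive
  have hb0' : (0:ℝ) < (n:ℝ) - k := by rw [← hbcast]; exact hb0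
  have hD : (0:ℝ) < Real.sqrt ((n : ℝ) / (2 * π * k * ((n : ℝ) - k))) *
      Real.exp ((n:ℝ) * Ifun ((k : ℝ) / n)) := by
    have : (0:ℝ) < (n : ℝ) / (2 * π * k * ((n : ℝ) - k)) := by
      have := Real.pi_pos; positivity
    positivity
  have hkey := key_identity n k hk1 hkn
  rw [← hbdef] at hkey
  have hratio : (n.choose k : ℝ) /
      (Real.sqrt ((n : ℝ) / (2 * π * k * ((n : ℝ) - k))) *
        Real.exp ((n:ℝ) * Ifun ((k : ℝ) / n))) =
      Real.sqrt π * stirlingSeq n / (stirlingSeq k * stirlingSeq b) := by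
    rw [hkey, mul_div_assoc, div_self hD.ne', mul_one]
  rw [hratio]
  -- bounds on R
  have hππ : (0:ℝ) < Real.sqrt π := Real.sqrt_pos.2 Real.pi_pos
  have hsn := stirling_lower n hn
  have hsk := stirling_lower k hk1
  have hsb := stirling_lower b hb1
  have hsnU := stirling_upper n hn
  have hskU := stirling_upper k hk1
  have hsbU := stirling_upper b hb1
  have hsn0 : (0:ℝ) < stirlingSeq n := lt_of_lt_of_le hππ hsn
  have hsk0 : (0:ℝ) < stirlingSeq k := lt_of_lt_of_le hππ hsk
  have hsb0 : (0:ℝ) < stirlingSeq b := lt_of_lt_of_le hππ hsb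
  set R : ℝ := Real.sqrt π * stirlingSeq n / (stirlingSeq k * stirlingSeq b) with hR
  have hexp1 : Real.exp (1/(2*(n:ℝ))) ≤ 1 + 4/n := by
    have hx : (0:ℝ) < 1/(2*(n:ℝ)) := by positivity
    have hx1 : 1/(2*(n:ℝ)) ≤ 1 := by
      rw [div_le_one (by positivity)]; linarith [hn1']
    have h1 : Real.exp (1/(2*(n:ℝ))) ≤ Real.exp 1 := Real.exp_le_exp.2 hx1
    have h2 : 1 - 1/(2*(n:ℝ)) ≤ Real.exp (-(1/(2*(n:ℝ)))) := by
      have := Real.add_one_le_exp (-(1/(2*(n:ℝ)))); linarith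
    have h3 : Real.exp (1/(2*(n:ℝ))) * (1 - 1/(2*(n:ℝ))) ≤ 1 := by
      calc Real.exp (1/(2*(n:ℝ))) * (1 - 1/(2*(n:ℝ)))
          ≤ Real.exp (1/(2*(n:ℝ))) * Real.exp (-(1/(2*(n:ℝ)))) := by
            apply mul_le_mul_of_nonneg_left h2 (Real.exp_pos _).le
        _ = 1 := by rw [← Real.exp_add]; norm_num
    have h8 : (4:ℝ)/n = 8 * (1/(2*(n:ℝ))) := by field_simp; ring
    have p1 := mul_le_mul_of_nonneg_left h1 hx.le
    have p2 : 1/(2*(n:ℝ)) * Real.exp 1 ≤ 1/(2*(n:ℝ)) * 8 :=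
      mul_le_mul_of_nonneg_left (by linarith [Real.exp_one_lt_d9]) hx.le
    nlinarith [p1, p2, h3, h8]
  have hupper : R ≤ 1 + 4/n := by
    have : R ≤ Real.exp (1/(2*(n:ℝ))) := by
      rw [hR]
      rw [div_le_iff₀ (by positivity)]
      calc Real.sqrt π * stirlingSeq n ≤ Real.sqrt π * (Real.sqrt π * Real.exp (1/(2*n))) := by
            apply mul_le_mul_of_nonneg_left hsnU hππ.le
        _ = Real.exp (1/(2*(n:ℝ))) * (Real.sqrt π * Real.sqrt π) := by ring
        _ ≤ Real.exp (1/(2*(n:ℝ))) * (stirlingSeq k * stirlingSeq b) :=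
            mul_le_mul_of_nonneg_left (mul_le_mul hsk hsb hππ.le hsk0.le) (Real.exp_pos _).le
    linarith
  have hlower : 1 - 4/n ≤ R := by
    have hek : stirlingSeq k * stirlingSeq b ≤
        Real.sqrt π * Real.sqrt π * (Real.exp (1/(2*(k:ℝ))) * Real.exp (1/(2*(b:ℝ)))) := by
      calc stirlingSeq k * stirlingSeq b
          ≤ (Real.sqrt π * Real.exp (1/(2*k))) * (Real.sqrt π * Real.exp (1/(2*b))) :=
            mul_le_mul hskU hsbU hsb0.le (by positivity)
        _ = _ := by ring
    have hsum : 1/(2*(k:ℝ)) + 1/(2*(b:ℝ)) ≤ 4/n := by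
      have h1 : 1/(2*(k:ℝ)) ≤ 2/n := by
        rw [div_le_div_iff₀ (by positivity) hn0]; linarith
      have h2 : 1/(2*(b:ℝ)) ≤ 2/n := by
        rw [div_le_div_iff₀ (by positivity) hn0]; linarith
      have h3 : (2:ℝ)/n + 2/n = 4/n := by ring
      linarith
    have hexp2 : Real.exp (1/(2*(k:ℝ))) * Real.exp (1/(2*(b:ℝ))) =
        Real.exp (1/(2*(k:ℝ)) + 1/(2*(b:ℝ))) := (Real.exp_add _ _).symm
    have hR1 : Real.exp (-(1/(2*(k:ℝ)) + 1/(2*(b:ℝ)))) ≤ R := by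
      rw [hR, le_div_iff₀ (by positivity)]
      have hπn : Real.sqrt π * Real.sqrt π ≤ Real.sqrt π * stirlingSeq n :=
        mul_le_mul_of_nonneg_left hsn hππ.le
      calc Real.exp (-(1/(2*(k:ℝ)) + 1/(2*(b:ℝ)))) * (stirlingSeq k * stirlingSeq b)
          ≤ Real.exp (-(1/(2*(k:ℝ)) + 1/(2*(b:ℝ)))) *
            (Real.sqrt π * Real.sqrt π * Real.exp (1/(2*(k:ℝ)) + 1/(2*(b:ℝ)))) := by
            rw [← hexp2]
            exact mul_le_mul_of_nonneg_left hek (Real.exp_pos _).le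
        _ = Real.sqrt π * Real.sqrt π *
              (Real.exp (1/(2*(k:ℝ)) + 1/(2*(b:ℝ))) * Real.exp (-(1/(2*(k:ℝ)) + 1/(2*(b:ℝ))))) := by
            ring
        _ = Real.sqrt π * Real.sqrt π := by
            rw [← Real.exp_add, add_neg_cancel, Real.exp_zero, mul_one]
        _ ≤ Real.sqrt π * stirlingSeq n := hπn
    have := Real.add_one_le_exp (-(1/(2*(k:ℝ)) + 1/(2*(b:ℝ))))
    linarith
  rw [abs_le]
  constructor <;> [linarith; linarith]
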